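/- If Martin's axiom holds, then every winning set of guesswords for no-duplication infinite Mastermind over a countably infinite color set has size continuum; equivalently, the mastermind number 𝕞 equals 𝔠 under MA. -/

import Mathlib

set_option linter.unusedSectionVars false
set_option maxHeartbeats 1000000


/-- Martin's axiom: for every nonempty ccc partial order and every family of
fewer than continuum many (downward) dense subsets, there is a filter meeting
them all. -/
def MartinsAxiom : Prop :=
  ∀ (P : Type) [PartialOrder P], Nonempty P →
    (∀ A : Set P, (∀ p ∈ A, ∀ q ∈ A, p ≠ q → ¬∃ r : P, r ≤ p ∧ r ≤ q) →
      A.Countable) →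
    ∀ 𝒟 : Set (Set P), Cardinal.mk 𝒟 < Cardinal.continuum →
      (∀ D ∈ 𝒟, ∀ p : P, ∃ q ∈ D, q ≤ p) →
      ∃ F : Set P, F.Nonempty ∧
        (∀ p ∈ F, ∀ q ∈ F, ∃ r ∈ F, r ≤ p ∧ r ≤ q) ∧
        (∀ p ∈ F, ∀ q : P, p ≤ q → q ∈ F) ∧
        ∀ D ∈ 𝒟, (F ∩ D).Nonempty

/-- Permutations acting only on the incorrect positions of `s` against `w`. -/
def IncorrectPerm {α : Type*} (s w : ℕ → α) : Type :=
  {π : Equiv.Perm ℕ // ∀ n : ℕ, s n = w n → π n = n}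

instance {α : Type*} (s w : ℕ → α) : Nonempty (IncorrectPerm s w) :=
  ⟨⟨Equiv.refl ℕ, fun _ _ => rfl⟩⟩

/-- The rearrangement count `ρ`. -/
noncomputable def rearrangeCount {α : Type*} (s w : ℕ → α) : Cardinal :=
  ⨆ π : IncorrectPerm s w,
    Cardinal.mk {m : ℕ | s m ≠ w m ∧ s ((π.1).symm m) = w m}

/-- The inherent error count `ε`. -/
noncomputable def errorCount {α : Type*} (s w : ℕ → α) : Cardinal :=
  ⨅ π : IncorrectPerm s w, Cardinal.mk {m : ℕ | s ((π.1).symm m) ≠ w m}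

/-- The Mastermind feedback `(κ, ρ, ε)` of the guess `s` against `w`. -/
noncomputable def masterFeedback {α : Type*} (s w : ℕ → α) :
    Cardinal × Cardinal × Cardinal :=
  (Cardinal.mk {n : ℕ | s n = w n}, rearrangeCount s w, errorCount s w)

namespace MMaux
instance optZero (α : Type) : Zero (Option α) := ⟨none⟩

@[ext] structure Cond (α : Type) where
  f : ℕ →₀ Option α
  g : ℕ →₀ Option α
  F : Finset α
  G : Finset α
  hf : ∀ m n a, f m = some a → f n = some a → m = n
  hg : ∀ m n a, g m = some a → g n = some a → m = n
  hfF : ∀ n a, f n = some a → a ∉ F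
  hgG : ∀ n a, g n = some a → a ∉ G

variable {α : Type} [Countable α]

instance : Countable (Cond α) := by
  classical
  have : Function.Injective (fun x : Cond α => (x.f, x.g, x.F, x.G)) := by
    intro x y h
    simp only [Prod.mk.injEq] at h
    ext1 <;> simp [h.1, h.2.1, h.2.2.1, h.2.2.2]
  exact this.countable

instance : PartialOrder (Cond α) where
  le x y := (∀ n a, y.f n = some a → x.f n = some a) ∧ y.F ⊆ x.F ∧
            (∀ n a, y.g n = some a → x.g n = some a) ∧ y.G ⊆ x.G
  le_refl x := ⟨fun _ _ h => h, le_refl _, fun _ _ h => h, le_refl _⟩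
  le_trans x y z h1 h2 := ⟨fun n a h => h1.1 n a (h2.1 n a h), h2.2.1.trans h1.2.1,
    fun n a h => h1.2.2.1 n a (h2.2.2.1 n a h), h2.2.2.2.trans h1.2.2.2⟩
  le_antisymm x y h1 h2 := by
    have hf : x.f = y.f := by
      ext n
      cases hx : x.f n with
      | none => cases hy : y.f n with
        | none => rfl
        | some a => rw [h1.1 n a hy] at hx; exact absurd hx (Option.some_ne_none a)
      | some a => rw [h2.1 n a hx]
    have hg : x.g = y.g := by
      ext n
      cases hx : x.g n with
      | none => cases hy : y.g n with
        | none => rfl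
        | some a => rw [h1.2.2.1 n a hy] at hx; exact absurd hx (Option.some_ne_none a)
      | some a => rw [h2.2.2.1 n a hx]
    ext1
    · exact hf
    · exact hg
    · exact le_antisymm h2.2.1 h1.2.1
    · exact le_antisymm h2.2.2.2 h1.2.2.2

lemma le_def {x y : Cond α} : x ≤ y ↔
    (∀ n a, y.f n = some a → x.f n = some a) ∧ y.F ⊆ x.F ∧
    (∀ n a, y.g n = some a → x.g n = some a) ∧ y.G ⊆ x.G := Iff.rfl

/-- the set of values used by a finitely supported partial function is finite -/
lemma used_finite (f : ℕ →₀ Option α) : {a : α | ∃ n, f n = some a}.Finite := by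
  have h : {a : α | ∃ n, f n = some a} ⊆ Option.some ⁻¹' (f '' ↑f.support) := by
    rintro a ⟨n, hn⟩
    refine ⟨n, ?_, hn⟩
    simp only [Finset.mem_coe, Finsupp.mem_support_iff, hn]
    exact fun h => Option.some_ne_none a h
  exact Set.Finite.subset (((f.support.finite_toSet).image _).preimage
    (Option.some_injective α).injOn) h

lemma dom_finite (f : ℕ →₀ Option α) : {n : ℕ | f n ≠ none}.Finite := by
  have : {n : ℕ | f n ≠ none} ⊆ ↑f.support := by
    intro n hn
    rw [Finset.mem_coe, Finsupp.mem_support_iff]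
    exact hn
  exact Set.Finite.subset f.support.finite_toSet this

lemma exists_fresh_val [Infinite α] (B : Set α) (hB : B.Finite) : ∃ a, a ∉ B :=
  hB.infinite_compl.nonempty

lemma exists_fresh_nat (B : Set ℕ) (hB : B.Finite) (n : ℕ) : ∃ m, n ≤ m ∧ m ∉ B := by
  obtain ⟨m, hm, hlt⟩ := hB.infinite_compl.exists_gt n
  exact ⟨m, le_of_lt hlt, hm⟩

/-- extend `f` at an undefined point with a fresh value -/
lemma exists_le_updF (x : Cond α) (n : ℕ) (a : α) (h1 : x.f n = none)
    (h2 : ∀ m b, x.f m = some b → b ≠ a) (h3 : a ∉ x.F) :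
    ∃ y : Cond α, y ≤ x ∧ y.f n = some a ∧ y.g = x.g ∧ y.F = x.F ∧ y.G = x.G ∧
      ∀ m, m ≠ n → y.f m = x.f m := by
  classical
  have key : ∀ m b, (x.f.update n (some a)) m = some b →
      (m = n ∧ b = a) ∨ (m ≠ n ∧ x.f m = some b) := by
    intro m b hm
    rw [Finsupp.coe_update, Function.update_apply] at hm
    by_cases e : m = n
    · rw [if_pos e] at hm
      exact Or.inl ⟨e, (Option.some.inj hm).symm⟩
    · rw [if_neg e] at hm
      exact Or.inr ⟨e, hm⟩
  refine ⟨⟨x.f.update n (some a), x.g, x.F, x.G, ?_, x.hg, ?_, x.hgG⟩, ?_, ?_, rfl, rfl, rfl, ?_⟩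
  · intro m m' b hm hm'
    rcases key m b hm with ⟨e1, f1⟩ | ⟨e1, f1⟩ <;> rcases key m' b hm' with ⟨e2, f2⟩ | ⟨e2, f2⟩
    · rw [e1, e2]
    · exact absurd f1 (h2 m' b f2)
    · exact absurd f2 (h2 m b f1)
    · exact x.hf m m' b f1 f2
  · intro m b hm
    rcases key m b hm with ⟨_, rfl⟩ | ⟨_, hm⟩
    · exact h3
    · exact x.hfF m b hm
  · refine ⟨?_, le_refl _, fun _ _ h => h, le_refl _⟩
    intro m b hm
    have e : m ≠ n := fun e => by rw [e, h1] at hm; exact Option.some_ne_none b hm.symm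
    show (x.f.update n (some a)) m = some b
    rw [Finsupp.coe_update, Function.update_apply, if_neg e]
    exact hm
  · show (x.f.update n (some a)) n = some a
    rw [Finsupp.coe_update, Function.update_self]
  · intro m hm
    show (x.f.update n (some a)) m = x.f m
    rw [Finsupp.coe_update, Function.update_of_ne hm]

/-- extend `g` at an undefined point with a fresh value -/
lemma exists_le_updG (x : Cond α) (n : ℕ) (a : α) (h1 : x.g n = none)
    (h2 : ∀ m b, x.g m = some b → b ≠ a) (h3 : a ∉ x.G) :
    ∃ y : Cond α, y ≤ x ∧ y.g n = some a ∧ y.f = x.f ∧ y.F = x.F ∧ y.G = x.G ∧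
      ∀ m, m ≠ n → y.g m = x.g m := by
  classical
  have key : ∀ m b, (x.g.update n (some a)) m = some b →
      (m = n ∧ b = a) ∨ (m ≠ n ∧ x.g m = some b) := by
    intro m b hm
    rw [Finsupp.coe_update, Function.update_apply] at hm
    by_cases e : m = n
    · rw [if_pos e] at hm
      exact Or.inl ⟨e, (Option.some.inj hm).symm⟩
    · rw [if_neg e] at hm
      exact Or.inr ⟨e, hm⟩
  refine ⟨⟨x.f, x.g.update n (some a), x.F, x.G, x.hf, ?_, x.hfF, ?_⟩, ?_, ?_, rfl, rfl, rfl, ?_⟩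
  · intro m m' b hm hm'
    rcases key m b hm with ⟨e1, f1⟩ | ⟨e1, f1⟩ <;> rcases key m' b hm' with ⟨e2, f2⟩ | ⟨e2, f2⟩
    · rw [e1, e2]
    · exact absurd f1 (h2 m' b f2)
    · exact absurd f2 (h2 m b f1)
    · exact x.hg m m' b f1 f2
  · intro m b hm
    rcases key m b hm with ⟨_, rfl⟩ | ⟨_, hm⟩
    · exact h3
    · exact x.hgG m b hm
  · refine ⟨fun _ _ h => h, le_refl _, ?_, le_refl _⟩
    intro m b hm
    have e : m ≠ n := fun e => by rw [e, h1] at hm; exact Option.some_ne_none b hm.symm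
    show (x.g.update n (some a)) m = some b
    rw [Finsupp.coe_update, Function.update_apply, if_neg e]
    exact hm
  · show (x.g.update n (some a)) n = some a
    rw [Finsupp.coe_update, Function.update_self]
  · intro m hm
    show (x.g.update n (some a)) m = x.g m
    rw [Finsupp.coe_update, Function.update_of_ne hm]

/-- add a forbidden value for `f` -/
lemma exists_le_forbF (x : Cond α) (a : α) (h : ∀ m b, x.f m = some b → b ≠ a) :
    ∃ y : Cond α, y ≤ x ∧ a ∈ y.F ∧ y.f = x.f ∧ y.g = x.g ∧ y.G = x.G := by
  classical
  refine ⟨⟨x.f, x.g, insert a x.F, x.G, x.hf, x.hg, ?_, x.hgG⟩, ?_, ?_, rfl, rfl, rfl⟩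
  · intro m b hm hb
    rcases Finset.mem_insert.mp hb with rfl | hb
    · exact h m b hm rfl
    · exact x.hfF m b hm hb
  · exact ⟨fun _ _ h => h, Finset.subset_insert _ _, fun _ _ h => h, le_refl _⟩
  · exact Finset.mem_insert_self _ _

/-- add a forbidden value for `g` -/
lemma exists_le_forbG (x : Cond α) (a : α) (h : ∀ m b, x.g m = some b → b ≠ a) :
    ∃ y : Cond α, y ≤ x ∧ a ∈ y.G ∧ y.f = x.f ∧ y.g = x.g ∧ y.F = x.F := by
  classical
  refine ⟨⟨x.f, x.g, x.F, insert a x.G, x.hf, x.hg, x.hfF, ?_⟩, ?_, ?_, rfl, rfl, rfl⟩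
  · intro m b hm hb
    rcases Finset.mem_insert.mp hb with rfl | hb
    · exact h m b hm rfl
    · exact x.hgG m b hm hb
  · exact ⟨fun _ _ h => h, le_refl _, fun _ _ h => h, Finset.subset_insert _ _⟩
  · exact Finset.mem_insert_self _ _

/-- swap the roles of the two codewords -/
def Cond.swap (x : Cond α) : Cond α := ⟨x.g, x.f, x.G, x.F, x.hg, x.hf, x.hgG, x.hfF⟩

lemma Cond.swap_le_swap {x y : Cond α} (h : x ≤ y) : x.swap ≤ y.swap :=
  ⟨h.2.2.1, h.2.2.2, h.1, h.2.1⟩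

lemma Cond.swap_swap (x : Cond α) : x.swap.swap = x := rfl

/-- both codewords are defined at `n` -/
def Dtot (n : ℕ) : Set (Cond α) :=
  {x | (∃ a, x.f n = some a) ∧ ∃ a, x.g n = some a}

/-- the first codeword agrees with `s` somewhere at or above `n` -/
def DAgreeF (s : ℕ → α) (n : ℕ) : Set (Cond α) :=
  {x | ∃ m, n ≤ m ∧ x.f m = some (s m)}

def DAgreeG (s : ℕ → α) (n : ℕ) : Set (Cond α) := Cond.swap ⁻¹' DAgreeF s n

/-- a rearrangement pair for `s` at or above `n` -/
def DPairF (s : ℕ → α) (n : ℕ) : Set (Cond α) :=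
  {x | ∃ k m, n ≤ k ∧ n ≤ m ∧ k ≠ m ∧ x.f m = some (s k) ∧ ∃ b, x.f k = some b ∧ b ≠ s k}

def DPairG (s : ℕ → α) (n : ℕ) : Set (Cond α) := Cond.swap ⁻¹' DPairF s n

/-- some value of `s` at or above `n` is forbidden -/
def DForbF (s : ℕ → α) (n : ℕ) : Set (Cond α) :=
  {x | ∃ k, n ≤ k ∧ s k ∈ x.F}

def DForbG (s : ℕ → α) (n : ℕ) : Set (Cond α) := Cond.swap ⁻¹' DForbF s n

/-- the two codewords differ somewhere -/
def DDiff : Set (Cond α) :=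
  {x | ∃ n a b, x.f n = some a ∧ x.g n = some b ∧ a ≠ b}

lemma dense_swap {D : Set (Cond α)} (h : ∀ p : Cond α, ∃ q ∈ D, q ≤ p) :
    ∀ p : Cond α, ∃ q ∈ Cond.swap ⁻¹' D, q ≤ p := by
  intro p
  obtain ⟨q, hq, hle⟩ := h p.swap
  refine ⟨q.swap, ?_, ?_⟩
  · show q.swap.swap ∈ D
    rwa [Cond.swap_swap]
  · have := Cond.swap_le_swap hle
    rwa [Cond.swap_swap] at this

variable [Infinite α]

/-- extend so that `f` is defined at `n` -/
lemma exists_le_domF (x : Cond α) (n : ℕ) :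
    ∃ y, y ≤ x ∧ (∃ a, y.f n = some a) ∧ y.g = x.g ∧ y.G = x.G := by
  cases h : x.f n with
  | some a => exact ⟨x, le_refl x, ⟨a, h⟩, rfl, rfl⟩
  | none =>
    obtain ⟨a, ha⟩ := exists_fresh_val ({a : α | ∃ m, x.f m = some a} ∪ ↑x.F)
      ((used_finite _).union x.F.finite_toSet)
    obtain ⟨y, hy, h2, hg, _, hG, _⟩ := exists_le_updF x n a h
      (fun m b hb e => ha (Or.inl ⟨m, e ▸ hb⟩)) (fun hF => ha (Or.inr hF))
    exact ⟨y, hy, ⟨a, h2⟩, hg, hG⟩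

lemma dense_Dtot (n : ℕ) : ∀ p : Cond α, ∃ q ∈ Dtot n, q ≤ p := by
  intro p
  obtain ⟨y, hy, ⟨a, ha⟩, _, _⟩ := exists_le_domF p n
  obtain ⟨z, hz, ⟨b, hb⟩, _, _⟩ := exists_le_domF y.swap n
  refine ⟨z.swap, ⟨⟨a, ?_⟩, ⟨b, hb⟩⟩, ?_⟩
  · have h1 : z ≤ y.swap := hz
    exact h1.2.2.1 n a ha
  · have := Cond.swap_le_swap hz
    rw [Cond.swap_swap] at this
    exact this.trans hy

lemma dense_DAgreeF (s : ℕ → α) (hs : Function.Injective s) (n : ℕ) :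
    ∀ p : Cond α, ∃ q ∈ DAgreeF s n, q ≤ p := by
  intro p
  obtain ⟨m, hnm, hm⟩ := exists_fresh_nat
    ({m | p.f m ≠ none} ∪ s ⁻¹' ({a : α | ∃ m, p.f m = some a} ∪ ↑p.F))
    ((dom_finite _).union (((used_finite _).union p.F.finite_toSet).preimage hs.injOn)) n
  simp only [Set.mem_union, Set.mem_singleton_iff, Set.mem_setOf_eq, not_or] at hm
  obtain ⟨hm1, hm2⟩ := hm
  have h1 : p.f m = none := by
    by_contra h
    exact hm1 h
  obtain ⟨y, hy, h2, _, _, _, _⟩ := exists_le_updF p m (s m) h1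
    (fun k b hb e => hm2 (Or.inl ⟨k, e ▸ hb⟩)) (fun hF => hm2 (Or.inr hF))
  exact ⟨y, ⟨m, hnm, h2⟩, hy⟩

lemma dense_DPairF (s : ℕ → α) (hs : Function.Injective s) (n : ℕ) :
    ∀ p : Cond α, ∃ q ∈ DPairF s n, q ≤ p := by
  intro p
  -- choose k ≥ n with p.f k undefined and s k unused and unforbidden
  obtain ⟨k, hnk, hk⟩ := exists_fresh_nat
    ({m | p.f m ≠ none} ∪ s ⁻¹' ({a : α | ∃ m, p.f m = some a} ∪ ↑p.F))
    ((dom_finite _).union (((used_finite _).union p.F.finite_toSet).preimage hs.injOn)) n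
  simp only [Set.mem_union, Set.mem_singleton_iff, Set.mem_setOf_eq, not_or] at hk
  obtain ⟨hk1, hk2⟩ := hk
  have hfk : p.f k = none := by by_contra h; exact hk1 h
  -- choose m ≥ n, m ≠ k, p.f m undefined
  obtain ⟨m, hnm, hm⟩ := exists_fresh_nat ({m | p.f m ≠ none} ∪ {k})
    ((dom_finite _).union (Set.finite_singleton k)) n
  simp only [Set.mem_union, Set.mem_singleton_iff, Set.mem_setOf_eq, not_or] at hm
  obtain ⟨hm1, hmk⟩ := hm
  have hfm : p.f m = none := by by_contra h; exact hm1 h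
  have hmk' : m ≠ k := hmk
  -- put s k at position m
  obtain ⟨y, hy, hy2, _, hyF, _, hyel⟩ := exists_le_updF p m (s k) hfm
    (fun j b hb e => hk2 (Or.inl ⟨j, e ▸ hb⟩)) (fun hF => hk2 (Or.inr hF))
  -- choose a fresh value b ≠ s k for position k
  obtain ⟨b, hb⟩ := exists_fresh_val ({a : α | ∃ m, y.f m = some a} ∪ ↑y.F ∪ {s k})
    (((used_finite _).union y.F.finite_toSet).union (Set.finite_singleton _))
  simp only [Set.mem_union, Set.mem_singleton_iff, Set.mem_setOf_eq, not_or] at hb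
  have hbs : b ≠ s k := hb.2
  have hyk : y.f k = none := by rw [hyel k hmk'.symm]; exact hfk
  obtain ⟨z, hz, hz2, _, _, _, _⟩ := exists_le_updF y k b hyk
    (fun j c hc e => hb.1.1 ⟨j, e ▸ hc⟩) hb.1.2
  refine ⟨z, ⟨k, m, hnk, hnm, hmk'.symm, ?_, b, hz2, hbs⟩, hz.trans hy⟩
  exact hz.1 m (s k) hy2

lemma dense_DForbF (s : ℕ → α) (hs : Function.Injective s) (n : ℕ) :
    ∀ p : Cond α, ∃ q ∈ DForbF s n, q ≤ p := by
  intro p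
  obtain ⟨k, hnk, hk⟩ := exists_fresh_nat (s ⁻¹' {a : α | ∃ m, p.f m = some a})
    ((used_finite _).preimage hs.injOn) n
  obtain ⟨y, hy, h2, _, _, _⟩ := exists_le_forbF p (s k)
    (fun m b hb e => hk ⟨m, e ▸ hb⟩)
  exact ⟨y, ⟨k, hnk, h2⟩, hy⟩

lemma dense_DDiff : ∀ p : Cond α, ∃ q ∈ (DDiff : Set (Cond α)), q ≤ p := by
  intro p
  obtain ⟨n, -, hn⟩ := exists_fresh_nat ({m | p.f m ≠ none} ∪ {m | p.g m ≠ none})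
    ((dom_finite _).union (dom_finite _)) 0
  simp only [Set.mem_union, Set.mem_singleton_iff, Set.mem_setOf_eq, not_or] at hn
  have hfn : p.f n = none := by by_contra h; exact hn.1 h
  have hgn : p.g n = none := by by_contra h; exact hn.2 h
  obtain ⟨a, ha⟩ := exists_fresh_val ({a : α | ∃ m, p.f m = some a} ∪ ↑p.F)
    ((used_finite _).union p.F.finite_toSet)
  obtain ⟨y, hy, hy2, hyg, _, hyG, _⟩ := exists_le_updF p n a hfn
    (fun m b hb e => ha (Or.inl ⟨m, e ▸ hb⟩)) (fun hF => ha (Or.inr hF))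
  obtain ⟨b, hb⟩ := exists_fresh_val ({c : α | ∃ m, y.g m = some c} ∪ ↑y.G ∪ {a})
    (((used_finite _).union y.G.finite_toSet).union (Set.finite_singleton _))
  simp only [Set.mem_union, Set.mem_singleton_iff, Set.mem_setOf_eq, not_or] at hb
  have hygn : y.g n = none := by rw [hyg]; exact hgn
  obtain ⟨z, hz, hz2, _, _, _, _⟩ := exists_le_updG y n b hygn
    (fun m c hc e => hb.1.1 ⟨m, e ▸ hc⟩) hb.1.2
  refine ⟨z, ⟨n, a, b, hz.1 n a hy2, hz2, fun e => hb.2 e.symm⟩, hz.trans hy⟩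

instance : Nonempty (Cond α) :=
  ⟨⟨0, 0, ∅, ∅,
    fun m _ a h => by rw [Finsupp.coe_zero, Pi.zero_apply] at h; exact absurd h.symm (Option.some_ne_none a),
    fun m _ a h => by rw [Finsupp.coe_zero, Pi.zero_apply] at h; exact absurd h.symm (Option.some_ne_none a),
    fun m a h => by rw [Finsupp.coe_zero, Pi.zero_apply] at h; exact absurd h.symm (Option.some_ne_none a),
    fun m a h => by rw [Finsupp.coe_zero, Pi.zero_apply] at h; exact absurd h.symm (Option.some_ne_none a)⟩⟩

/-- From a sufficiently generic filter, extract the codeword read off from the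
first coordinate, together with its basic properties. -/
lemma generic_props (Fil : Set (Cond α))
    (hdir : ∀ p ∈ Fil, ∀ q ∈ Fil, ∃ r ∈ Fil, r ≤ p ∧ r ≤ q)
    (htot : ∀ n : ℕ, ∃ x ∈ Fil, ∃ a, x.f n = some a) :
    ∃ c : ℕ → α, Function.Injective c ∧
      (∀ x ∈ Fil, ∀ n a, x.f n = some a → c n = a) ∧
      (∀ x ∈ Fil, ∀ a ∈ x.F, a ∉ Set.range c) := by
  classical
  have htot' : ∀ n : ℕ, ∃ a, ∃ x ∈ Fil, x.f n = some a := by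
    intro n
    obtain ⟨x, hx, a, ha⟩ := htot n
    exact ⟨a, x, hx, ha⟩
  choose c x hx hfx using htot'
  have hof : ∀ y ∈ Fil, ∀ n a, y.f n = some a → c n = a := by
    intro y hy n a ha
    obtain ⟨r, hr, hr1, hr2⟩ := hdir y hy (x n) (hx n)
    have e1 := hr1.1 n a ha
    have e2 := hr2.1 n (c n) (hfx n)
    rw [e1] at e2
    exact (Option.some.inj e2).symm
  refine ⟨c, ?_, hof, ?_⟩
  · intro i j hij
    obtain ⟨r, hr, hr1, hr2⟩ := hdir (x i) (hx i) (x j) (hx j)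
    have e1 := hr1.1 i (c i) (hfx i)
    have e2 := hr2.1 j (c j) (hfx j)
    rw [hij] at e1
    exact r.hf i j (c j) e1 e2
  · rintro y hy a haF ⟨n, rfl⟩
    obtain ⟨r, hr, hr1, hr2⟩ := hdir y hy (x n) (hx n)
    exact r.hfF n (c n) (hr2.1 n (c n) (hfx n)) (hr1.2.1 haF)

lemma infinite_of_unbounded (A : Set ℕ) (h : ∀ n, ∃ m, n ≤ m ∧ m ∈ A) : A.Infinite := by
  intro hfin
  obtain ⟨b, hb⟩ := hfin.bddAbove
  obtain ⟨m, hm, hmA⟩ := h (b + 1)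
  exact absurd (hb hmA) (by omega)

lemma mk_eq_aleph0_of_infinite {A : Set ℕ} (h : A.Infinite) :
    Cardinal.mk A = Cardinal.aleph0 := by
  have := h.to_subtype
  exact Cardinal.mk_eq_aleph0 _

/-- The key feedback computation: if the guess `s` agrees with the codeword `w`
infinitely often, admits unboundedly many rearrangement pairs, and takes
infinitely many values outside the range of `w`, then the feedback is
`(ℵ₀, ℵ₀, ℵ₀)`. -/
lemma feedback_eq_of {α : Type} (s w : ℕ → α) (hs : Function.Injective s)
    (h1 : {n | s n = w n}.Infinite)
    (h2 : ∀ n, ∃ k m, n ≤ k ∧ n ≤ m ∧ k ≠ m ∧ w m = s k ∧ w k ≠ s k)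
    (h3 : {k | s k ∉ Set.range w}.Infinite) :
    masterFeedback s w = (Cardinal.aleph0, Cardinal.aleph0, Cardinal.aleph0) := by
  classical
  refine Prod.ext (mk_eq_aleph0_of_infinite h1) (Prod.ext ?_ ?_)
  · -- rearrangement count
    show rearrangeCount s w = Cardinal.aleph0
    -- build the sequence of disjoint swap pairs
    have h2' : ∀ n : ℕ, ∃ q : ℕ × ℕ, n ≤ q.1 ∧ n ≤ q.2 ∧ q.1 ≠ q.2 ∧
        w q.2 = s q.1 ∧ w q.1 ≠ s q.1 := by
      intro n
      obtain ⟨k, m, h⟩ := h2 n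
      exact ⟨(k, m), h⟩
    let Q : ℕ → ℕ × ℕ := fun i => Nat.rec ((h2' 0).choose)
      (fun _ prev => (h2' (max prev.1 prev.2 + 1)).choose) i
    have hQs : ∀ i, Q (i + 1) = (h2' (max (Q i).1 (Q i).2 + 1)).choose := fun _ => rfl
    set k : ℕ → ℕ := fun i => (Q i).1 with hk
    set m : ℕ → ℕ := fun i => (Q i).2 with hm
    have hQ : ∀ i, k i ≠ m i ∧ w (m i) = s (k i) ∧ w (k i) ≠ s (k i) := by
      intro i
      cases i with
      | zero => exact ((h2' 0).choose_spec).2.2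
      | succ j =>
        have := (h2' (max (Q j).1 (Q j).2 + 1)).choose_spec
        rw [← hQs j] at this
        exact this.2.2
    have hgt : ∀ i, max (k i) (m i) < min (k (i + 1)) (m (i + 1)) := by
      intro i
      have := (h2' (max (Q i).1 (Q i).2 + 1)).choose_spec
      rw [← hQs i] at this
      have ha : max (k i) (m i) + 1 ≤ k (i + 1) := this.1
      have hb : max (k i) (m i) + 1 ≤ m (i + 1) := this.2.1
      simp only [lt_min_iff]
      omega
    have mono : ∀ i j, i < j → max (k i) (m i) < min (k j) (m j) := by
      intro i j hij
      induction j with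
      | zero => omega
      | succ j ih =>
        rcases Nat.lt_succ_iff_lt_or_eq.mp hij with h | h
        · calc max (k i) (m i) < min (k j) (m j) := ih h
            _ ≤ max (k j) (m j) := (min_le_left _ _).trans (le_max_left _ _)
            _ < _ := hgt j
        · rw [h]; exact hgt j
    have kinj : Function.Injective k := by
      intro i j hij
      by_contra hne
      rcases Nat.lt_or_ge i j with h | h
      · have := mono i j h
        have : k i < k j := lt_of_le_of_lt (le_max_left _ _)
          (this.trans_le (min_le_left _ _))
        omega
      · have hlt : j < i := lt_of_le_of_ne h (Ne.symm hne)
        have := mono j i hlt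
        have : k j < k i := lt_of_le_of_lt (le_max_left _ _)
          (this.trans_le (min_le_left _ _))
        omega
    have minj : Function.Injective m := by
      intro i j hij
      by_contra hne
      rcases Nat.lt_or_ge i j with h | h
      · have := mono i j h
        have : m i < m j := lt_of_le_of_lt (le_max_right _ _)
          (this.trans_le (min_le_right _ _))
        omega
      · have hlt : j < i := lt_of_le_of_ne h (Ne.symm hne)
        have := mono j i hlt
        have : m j < m i := lt_of_le_of_lt (le_max_right _ _)
          (this.trans_le (min_le_right _ _))
        omega
    have kmne : ∀ i j, k i ≠ m j := by
      intro i j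
      rcases Nat.lt_trichotomy i j with h | h | h
      · have := mono i j h
        have : k i < m j := lt_of_le_of_lt (le_max_left _ _)
          (this.trans_le (min_le_right _ _))
        omega
      · rw [h]; exact (hQ j).1
      · have := mono j i h
        have : m j < k i := lt_of_le_of_lt (le_max_right _ _)
          (this.trans_le (min_le_left _ _))
        omega
    -- the swapping involution
    let σ : ℕ → ℕ := fun n =>
      if h : ∃ i, k i = n then m h.choose
      else if h : ∃ i, m i = n then k h.choose else n
    have σk : ∀ i, σ (k i) = m i := by
      intro i
      have hex : ∃ j, k j = k i := ⟨i, rfl⟩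
      have : σ (k i) = m hex.choose := dif_pos hex
      rw [this, minj.eq_iff.mpr (kinj hex.choose_spec)]
    have σm : ∀ i, σ (m i) = k i := by
      intro i
      have hex1 : ¬∃ j, k j = m i := by
        rintro ⟨j, hj⟩
        exact kmne j i hj
      have hex : ∃ j, m j = m i := ⟨i, rfl⟩
      have : σ (m i) = k hex.choose := by
        show dite _ _ _ = _
        rw [dif_neg hex1, dif_pos hex]
      rw [this, kinj.eq_iff.mpr (minj hex.choose_spec)]
    have σo : ∀ n, (¬∃ i, k i = n) → (¬∃ i, m i = n) → σ n = n := by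
      intro n h1' h2''
      show dite _ _ _ = _
      rw [dif_neg h1', dif_neg h2'']
    have hinv : Function.Involutive σ := by
      intro n
      by_cases hkn : ∃ i, k i = n
      · obtain ⟨i, rfl⟩ := hkn
        rw [σk i, σm i]
      · by_cases hmn : ∃ i, m i = n
        · obtain ⟨i, rfl⟩ := hmn
          rw [σm i, σk i]
        · rw [σo n hkn hmn, σo n hkn hmn]
    have hfix : ∀ n, s n = w n → σ n = n := by
      intro n hn
      by_cases hkn : ∃ i, k i = n
      · obtain ⟨i, rfl⟩ := hkn
        exact absurd hn.symm (hQ i).2.2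
      · by_cases hmn : ∃ i, m i = n
        · obtain ⟨i, rfl⟩ := hmn
          exfalso
          have : s (m i) = s (k i) := hn.trans (hQ i).2.1
          exact (hQ i).1.symm (hs this)
        · exact σo n hkn hmn
    let π : Equiv.Perm ℕ := hinv.toPerm σ
    have hπ : ∀ n, π n = σ n := fun _ => rfl
    have hπ0 : ∀ n, s n = w n → π n = n := fun n hn => hfix n hn
    let π₀ : IncorrectPerm s w := ⟨π, hπ0⟩
    have hsub : Set.range m ⊆ {x : ℕ | s x ≠ w x ∧ s (π.symm x) = w x} := by
      rintro _ ⟨i, rfl⟩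
      constructor
      · intro hc
        have : s (m i) = s (k i) := hc.trans (hQ i).2.1
        exact (hQ i).1.symm (hs this)
      · have hsymm : π.symm (m i) = k i := by
          rw [Equiv.symm_apply_eq, hπ (k i)]
          exact (σk i).symm
        rw [hsymm]
        exact (hQ i).2.1.symm
    have hinf : {x : ℕ | s x ≠ w x ∧ s (π.symm x) = w x}.Infinite :=
      (Set.infinite_range_of_injective minj).mono hsub
    have hval : Cardinal.mk {x : ℕ | s x ≠ w x ∧ s ((π₀.1).symm x) = w x} =
        Cardinal.aleph0 := mk_eq_aleph0_of_infinite hinf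
    refine le_antisymm ?_ ?_
    · exact ciSup_le' fun π' => Cardinal.mk_le_aleph0
    · rw [← hval]
      exact le_ciSup ⟨Cardinal.aleph0, by
        rintro _ ⟨π', rfl⟩
        exact Cardinal.mk_le_aleph0⟩ π₀
  · -- error count
    show errorCount s w = Cardinal.aleph0
    have key : ∀ π' : IncorrectPerm s w,
        Cardinal.mk {x : ℕ | s ((π'.1).symm x) ≠ w x} = Cardinal.aleph0 := by
      intro π'
      apply mk_eq_aleph0_of_infinite
      have hsub : π'.1 '' {n | s n ∉ Set.range w} ⊆ {x : ℕ | s ((π'.1).symm x) ≠ w x} := by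
        rintro _ ⟨n, hn, rfl⟩
        show s ((π'.1).symm (π'.1 n)) ≠ w (π'.1 n)
        rw [Equiv.symm_apply_apply]
        exact fun e => hn ⟨π'.1 n, e.symm⟩
      exact ((h3.image π'.1.injective.injOn)).mono hsub
    have : errorCount s w = ⨅ _ : IncorrectPerm s w, Cardinal.aleph0 := by
      unfold errorCount
      congr 1
      funext π'
      exact key π'
    rw [this, ciInf_const]

/-- the indexed family of dense sets -/
def famD (S : Set (ℕ → α)) : (ℕ ⊕ (↥S × ℕ × Fin 6) ⊕ Unit) → Set (Cond α)
  | Sum.inl n => Dtot n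
  | Sum.inr (Sum.inl (s, n, j)) =>
      ![DAgreeF s.1 n, DAgreeG s.1 n, DPairF s.1 n, DPairG s.1 n,
        DForbF s.1 n, DForbG s.1 n] j
  | Sum.inr (Sum.inr _) => DDiff

end MMaux

/-- Under Martin's axiom, every winning set of guesswords for no-duplication
infinite Mastermind over a countably infinite color set has size continuum:
the mastermind number `𝕞` equals `𝔠`. -/
theorem mastermind_number_eq_continuum_of_MA (α : Type) [Countable α]
    [Infinite α] (hMA : MartinsAxiom) (S : Set (ℕ → α))
    (hinj : ∀ s ∈ S, Function.Injective s)
    (hwin : ∀ c d : ℕ → α, Function.Injective c → Function.Injective d →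
      (∀ s ∈ S, masterFeedback s c = masterFeedback s d) → c = d) :
    Cardinal.mk S = Cardinal.continuum := by
  classical
  by_contra hne
  have hfeq : Cardinal.mk (ℕ → α) = Cardinal.continuum := by
    rw [Cardinal.mk_arrow]
    simp [Cardinal.mk_eq_aleph0, Cardinal.aleph0_power_aleph0]
  have hupper : Cardinal.mk S ≤ Cardinal.continuum := hfeq ▸ Cardinal.mk_set_le S
  have hlt : Cardinal.mk S < Cardinal.continuum := hupper.lt_of_ne hne
  set 𝒟 : Set (Set (MMaux.Cond α)) := Set.range (MMaux.famD S) with h𝒟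
  have hcard : Cardinal.mk 𝒟 < Cardinal.continuum := by
    refine lt_of_le_of_lt Cardinal.mk_range_le ?_
    simp only [Cardinal.mk_sum, Cardinal.mk_prod, Cardinal.mk_fintype, Cardinal.mk_denumerable,
      Cardinal.lift_id, Cardinal.mk_punit, Fintype.card_fin, Nat.cast_ofNat]
    have h6 : (6 : Cardinal) < Cardinal.continuum := Cardinal.nat_lt_continuum 6
    have h1 : (1 : Cardinal) < Cardinal.continuum := by
      exact_mod_cast Cardinal.nat_lt_continuum 1
    have ha := Cardinal.aleph0_lt_continuum
    have hc := Cardinal.aleph0_le_continuum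
    exact Cardinal.add_lt_of_lt hc ha (Cardinal.add_lt_of_lt hc
      (Cardinal.mul_lt_of_lt hc hlt (Cardinal.mul_lt_of_lt hc ha h6)) h1)
  have hdense : ∀ D ∈ 𝒟, ∀ p : MMaux.Cond α, ∃ q ∈ D, q ≤ p := by
    rintro D ⟨i, rfl⟩ p
    rcases i with n | ⟨s, n, j⟩ | u
    · exact MMaux.dense_Dtot n p
    · have hsinj := hinj s.1 s.2
      fin_cases j
      · exact MMaux.dense_DAgreeF s.1 hsinj n p
      · exact MMaux.dense_swap (MMaux.dense_DAgreeF s.1 hsinj n) p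
      · exact MMaux.dense_DPairF s.1 hsinj n p
      · exact MMaux.dense_swap (MMaux.dense_DPairF s.1 hsinj n) p
      · exact MMaux.dense_DForbF s.1 hsinj n p
      · exact MMaux.dense_swap (MMaux.dense_DForbF s.1 hsinj n) p
    · exact MMaux.dense_DDiff p
  obtain ⟨Fil, hFne, hFdir, hFup, hFmeet⟩ :=
    hMA (MMaux.Cond α) inferInstance (fun A _ => A.to_countable) 𝒟 hcard hdense
  have hmeet : ∀ i, ∃ x ∈ Fil, x ∈ MMaux.famD S i := by
    intro i
    obtain ⟨x, hx⟩ := hFmeet (MMaux.famD S i) ⟨i, rfl⟩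
    exact ⟨x, hx.1, hx.2⟩
  obtain ⟨c, hcinj, hcof, hcforb⟩ := MMaux.generic_props Fil hFdir (by
    intro n
    obtain ⟨x, hx, hx2⟩ := hmeet (Sum.inl n)
    have hx2' : x ∈ MMaux.Dtot n := hx2
    exact ⟨x, hx, hx2'.1⟩)
  set Fil' : Set (MMaux.Cond α) := MMaux.Cond.swap '' Fil with hFil'
  have hdir' : ∀ p ∈ Fil', ∀ q ∈ Fil', ∃ r ∈ Fil', r ≤ p ∧ r ≤ q := by
    rintro _ ⟨p, hp, rfl⟩ _ ⟨q, hq, rfl⟩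
    obtain ⟨r, hr, h1, h2⟩ := hFdir p hp q hq
    exact ⟨r.swap, ⟨r, hr, rfl⟩, MMaux.Cond.swap_le_swap h1, MMaux.Cond.swap_le_swap h2⟩
  obtain ⟨d, hdinj, hdof, hdforb⟩ := MMaux.generic_props Fil' hdir' (by
    intro n
    obtain ⟨x, hx, hx2⟩ := hmeet (Sum.inl n)
    have hx2' : x ∈ MMaux.Dtot n := hx2
    exact ⟨x.swap, ⟨x, hx, rfl⟩, hx2'.2⟩)
  have hne_cd : c ≠ d := by
    obtain ⟨x, hx, hmem⟩ := hmeet (Sum.inr (Sum.inr ()))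
    have hmem' : x ∈ (MMaux.DDiff : Set (MMaux.Cond α)) := hmem
    obtain ⟨n, a, b, hfa, hgb, hab⟩ := hmem'
    have e1 : c n = a := hcof x hx n a hfa
    have e2 : d n = b := hdof x.swap ⟨x, hx, rfl⟩ n b hgb
    intro e
    rw [e, e2] at e1
    exact hab e1.symm
  have hfc : ∀ s ∈ S, masterFeedback s c =
      (Cardinal.aleph0, Cardinal.aleph0, Cardinal.aleph0) := by
    intro s hsS
    apply MMaux.feedback_eq_of s c (hinj s hsS)
    · apply MMaux.infinite_of_unbounded
      intro n
      obtain ⟨x, hx, hmem⟩ := hmeet (Sum.inr (Sum.inl (⟨s, hsS⟩, n, 0)))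
      have hmem' : x ∈ MMaux.DAgreeF s n := hmem
      obtain ⟨m, hnm, hm⟩ := hmem'
      exact ⟨m, hnm, (hcof x hx m (s m) hm).symm⟩
    · intro n
      obtain ⟨x, hx, hmem⟩ := hmeet (Sum.inr (Sum.inl (⟨s, hsS⟩, n, 2)))
      have hmem' : x ∈ MMaux.DPairF s n := hmem
      obtain ⟨k, m, hnk, hnm, hkm, hm, b, hk, hbs⟩ := hmem'
      refine ⟨k, m, hnk, hnm, hkm, hcof x hx m (s k) hm, ?_⟩
      rw [hcof x hx k b hk]
      exact hbs
    · apply MMaux.infinite_of_unbounded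
      intro n
      obtain ⟨x, hx, hmem⟩ := hmeet (Sum.inr (Sum.inl (⟨s, hsS⟩, n, 4)))
      have hmem' : x ∈ MMaux.DForbF s n := hmem
      obtain ⟨k, hnk, hkF⟩ := hmem'
      exact ⟨k, hnk, hcforb x hx (s k) hkF⟩
  have hfd : ∀ s ∈ S, masterFeedback s d =
      (Cardinal.aleph0, Cardinal.aleph0, Cardinal.aleph0) := by
    intro s hsS
    apply MMaux.feedback_eq_of s d (hinj s hsS)
    · apply MMaux.infinite_of_unbounded
      intro n
      obtain ⟨x, hx, hmem⟩ := hmeet (Sum.inr (Sum.inl (⟨s, hsS⟩, n, 1)))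
      have hmem' : x.swap ∈ MMaux.DAgreeF s n := hmem
      obtain ⟨m, hnm, hm⟩ := hmem'
      exact ⟨m, hnm, (hdof x.swap ⟨x, hx, rfl⟩ m (s m) hm).symm⟩
    · intro n
      obtain ⟨x, hx, hmem⟩ := hmeet (Sum.inr (Sum.inl (⟨s, hsS⟩, n, 3)))
      have hmem' : x.swap ∈ MMaux.DPairF s n := hmem
      obtain ⟨k, m, hnk, hnm, hkm, hm, b, hk, hbs⟩ := hmem'
      refine ⟨k, m, hnk, hnm, hkm, hdof x.swap ⟨x, hx, rfl⟩ m (s k) hm, ?_⟩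
      rw [hdof x.swap ⟨x, hx, rfl⟩ k b hk]
      exact hbs
    · apply MMaux.infinite_of_unbounded
      intro n
      obtain ⟨x, hx, hmem⟩ := hmeet (Sum.inr (Sum.inl (⟨s, hsS⟩, n, 5)))
      have hmem' : x.swap ∈ MMaux.DForbF s n := hmem
      obtain ⟨k, hnk, hkF⟩ := hmem'
      exact ⟨k, hnk, hdforb x.swap ⟨x, hx, rfl⟩ (s k) hkF⟩
  exact hne_cd (hwin c d hcinj hdinj (fun s hs => by rw [hfc s hs, hfd s hs]))
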